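/- If (X, y, S) lies in the Frobenius neighborhood N_F(γ) of the central path, i.e., X ≻ 0, S ≻ 0, and ‖X^{1/2} S X^{1/2} - μI‖_F ≤ γμ with μ = (X • S)/n and γ ∈ (0,1), and if all eigenvalues of X and S are at most ω, then every eigenvalue of X is at least (1-γ)μ/ω and every eigenvalue of S is at least (1-γ)μ/ω. -/

import Mathlib

open Matrix

section
open scoped ComplexOrder

/-- The positive semidefinite square root of a positive semidefinite matrix
(restored: removed from Mathlib since the original was written). -/
noncomputable def Matrix.PosSemidef.sqrt {m : Type*} [Fintype m] [DecidableEq m] {𝕜 : Type*}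
    [RCLike 𝕜] {A : Matrix m m 𝕜} (hA : A.PosSemidef) : Matrix m m 𝕜 :=
  hA.1.eigenvectorUnitary.1 * diagonal ((↑) ∘ (√·) ∘ hA.1.eigenvalues) *
  (star hA.1.eigenvectorUnitary : Matrix m m 𝕜)

end

lemma Matrix.PosSemidef.posSemidef_sqrt {n : ℕ} {A : Matrix (Fin n) (Fin n) ℝ}
    (hA : A.PosSemidef) : hA.sqrt.PosSemidef := by
  rw [Matrix.PosSemidef.sqrt, Matrix.star_eq_conjTranspose]
  exact (posSemidef_diagonal_iff.mpr fun i => by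
    simp [RCLike.ofReal_real_eq_id, Real.sqrt_nonneg]).mul_mul_conjTranspose_same _

lemma Matrix.PosSemidef.sqrt_mul_self {n : ℕ} {A : Matrix (Fin n) (Fin n) ℝ}
    (hA : A.PosSemidef) : hA.sqrt * hA.sqrt = A := by
  have hU : star (hA.1.eigenvectorUnitary : Matrix (Fin n) (Fin n) ℝ) *
      (hA.1.eigenvectorUnitary : Matrix (Fin n) (Fin n) ℝ) = 1 := Unitary.coe_star_mul_self _
  have key : ∀ a b c : Matrix (Fin n) (Fin n) ℝ, a * b * c * (a * b * c) = a * (b * (c * a) * b) * c := by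
    intros; simp only [mul_assoc]
  conv_rhs => rw [hA.1.spectral_theorem, Unitary.conjStarAlgAut_apply]
  rw [Matrix.PosSemidef.sqrt, key, hU, mul_one, diagonal_mul_diagonal]
  congr 2
  congr 1
  funext i
  simp [RCLike.ofReal_real_eq_id, Real.mul_self_sqrt (hA.eigenvalues_nonneg i)]

/-- The Frobenius norm of a real square matrix. -/
noncomputable def frobeniusNorm' {n : ℕ} (M : Matrix (Fin n) (Fin n) ℝ) : ℝ :=
  Real.sqrt (∑ i, ∑ j, (M i j) ^ 2)

/-- If `(X, y, S)` lies in the Frobenius neighborhood `N_F(γ)` of the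
central path, i.e. `X ≻ 0`, `S ≻ 0` and `‖X^{1/2} S X^{1/2} - μI‖_F ≤ γμ` with
`μ = (X • S)/n` and `γ ∈ (0,1)`, and all eigenvalues of `X` and `S` are at most `ω`,
then every eigenvalue of `X` and of `S` is at least `(1-γ)μ/ω`. -/
lemma abs_quad_le {n : ℕ} (B : Matrix (Fin n) (Fin n) ℝ) (v : Fin n → ℝ) :
    |v ⬝ᵥ B *ᵥ v| ≤ frobeniusNorm' B * (v ⬝ᵥ v) := by
  have hvv : 0 ≤ v ⬝ᵥ v := Finset.sum_nonneg fun i _ => mul_self_nonneg _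
  have h1 : v ⬝ᵥ B *ᵥ v = ∑ p : Fin n × Fin n, (v p.1 * v p.2) * B p.1 p.2 := by
    rw [Fintype.sum_prod_type]
    simp only [dotProduct, mulVec]
    refine Finset.sum_congr rfl fun i _ => ?_
    simp only [dotProduct, Finset.mul_sum]
    exact Finset.sum_congr rfl fun j _ => by ring
  have h3 : ∑ p : Fin n × Fin n, (v p.1 * v p.2) ^ 2 = (v ⬝ᵥ v) ^ 2 := by
    rw [sq, dotProduct, Finset.sum_mul_sum, Fintype.sum_prod_type]
    exact Finset.sum_congr rfl fun i _ => Finset.sum_congr rfl fun j _ => by ring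
  have h4 : ∑ p : Fin n × Fin n, (B p.1 p.2) ^ 2 = (frobeniusNorm' B) ^ 2 := by
    rw [frobeniusNorm', Real.sq_sqrt (by positivity), Fintype.sum_prod_type]
  have h2 := Finset.sum_mul_sq_le_sq_mul_sq Finset.univ
    (fun p : Fin n × Fin n => v p.1 * v p.2) (fun p => B p.1 p.2)
  rw [h3, h4] at h2
  rw [← h1] at h2
  have h5 : (v ⬝ᵥ B *ᵥ v) ^ 2 ≤ (frobeniusNorm' B * (v ⬝ᵥ v)) ^ 2 := by
    calc (v ⬝ᵥ B *ᵥ v) ^ 2 ≤ (v ⬝ᵥ v) ^ 2 * (frobeniusNorm' B) ^ 2 := h2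
    _ = (frobeniusNorm' B * (v ⬝ᵥ v)) ^ 2 := by ring
  have hfn : 0 ≤ frobeniusNorm' B := Real.sqrt_nonneg _
  have := Real.sqrt_le_sqrt h5
  rwa [Real.sqrt_sq_eq_abs, Real.sqrt_sq (mul_nonneg hfn hvv)] at this

lemma quad_le_of_eig_le {n : ℕ} {A : Matrix (Fin n) (Fin n) ℝ} (hA : A.IsHermitian) {ω : ℝ}
    (h : ∀ i, hA.eigenvalues i ≤ ω) (v : Fin n → ℝ) :
    v ⬝ᵥ A *ᵥ v ≤ ω * (v ⬝ᵥ v) := by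
  have hU : (hA.eigenvectorUnitary : Matrix (Fin n) (Fin n) ℝ) *
      star (hA.eigenvectorUnitary : Matrix (Fin n) (Fin n) ℝ) = 1 :=
    mem_unitaryGroup_iff.mp hA.eigenvectorUnitary.2
  have key : ω • (1 : Matrix (Fin n) (Fin n) ℝ) - A
      = (hA.eigenvectorUnitary : Matrix (Fin n) (Fin n) ℝ) *
        diagonal (fun i => ω - hA.eigenvalues i) *
        (hA.eigenvectorUnitary : Matrix (Fin n) (Fin n) ℝ)ᴴ := by
    rw [← Matrix.star_eq_conjTranspose]
    nth_rewrite 1 [hA.spectral_theorem, Unitary.conjStarAlgAut_apply]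
    have hdiag : diagonal (fun i => ω - hA.eigenvalues i)
        = ω • (1 : Matrix (Fin n) (Fin n) ℝ) - diagonal (RCLike.ofReal ∘ hA.eigenvalues) := by
      rw [smul_one_eq_diagonal, ← diagonal_sub]
      congr 1
    rw [hdiag, Matrix.mul_sub, Matrix.sub_mul, Matrix.mul_smul, Matrix.smul_mul,
      Matrix.mul_one, hU]
  have hpsd : (ω • (1 : Matrix (Fin n) (Fin n) ℝ) - A).PosSemidef := by
    rw [key]
    exact (posSemidef_diagonal_iff.mpr fun i => sub_nonneg.mpr (h i)).mul_mul_conjTranspose_same _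
  have h2 := hpsd.dotProduct_mulVec_nonneg v
  rw [star_trivial, sub_mulVec, dotProduct_sub, smul_mulVec, one_mulVec,
    dotProduct_smul, smul_eq_mul] at h2
  linarith

lemma sqrt_mulVec_eigenvectorBasis {n : ℕ} {X : Matrix (Fin n) (Fin n) ℝ} (hX : X.PosSemidef)
    (i : Fin n) :
    hX.sqrt *ᵥ ⇑(hX.1.eigenvectorBasis i)
      = Real.sqrt (hX.1.eigenvalues i) • ⇑(hX.1.eigenvectorBasis i) := by
  rw [Matrix.PosSemidef.sqrt, ← mulVec_mulVec, hX.1.star_eigenvectorUnitary_mulVec,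
    ← mulVec_mulVec, diagonal_mulVec_single]
  have hco : ((RCLike.ofReal ∘ Real.sqrt ∘ hX.1.eigenvalues : Fin n → ℝ) i)
      = Real.sqrt (hX.1.eigenvalues i) := by
    simp [RCLike.ofReal_real_eq_id]
  have hsingle : (Pi.single i (Real.sqrt (hX.1.eigenvalues i) * 1) : Fin n → ℝ)
      = Real.sqrt (hX.1.eigenvalues i) • (Pi.single i 1 : Fin n → ℝ) := by
    ext j
    by_cases hj : j = i
    · subst hj; simp
    · simp [Pi.single_eq_of_ne hj]
  rw [hco, hsingle, mulVec_smul, hX.1.eigenvectorUnitary_mulVec]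

lemma symm_dot {n : ℕ} {A : Matrix (Fin n) (Fin n) ℝ} (hA : A.IsHermitian)
    (v w : Fin n → ℝ) : v ⬝ᵥ A *ᵥ w = (A *ᵥ v) ⬝ᵥ w := by
  rw [dotProduct_mulVec, ← mulVec_transpose, ← conjTranspose_eq_transpose_of_trivial, hA.eq]

theorem eigenvalue_lower_bound_in_neighborhood {n : ℕ}
    (X S : Matrix (Fin n) (Fin n) ℝ) (γ μ ω : ℝ)
    (hγ0 : 0 < γ) (hγ1 : γ < 1) (hω : 0 < ω)
    (hX : X.PosDef) (hS : S.PosDef)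
    (hμ : μ = (X * S).trace / n)
    (hN : frobeniusNorm'
        (hX.posSemidef.sqrt * S * hX.posSemidef.sqrt - μ • (1 : Matrix (Fin n) (Fin n) ℝ))
      ≤ γ * μ)
    (hXmax : ∀ i, hX.1.eigenvalues i ≤ ω)
    (hSmax : ∀ i, hS.1.eigenvalues i ≤ ω) :
    (∀ i, (1 - γ) * μ / ω ≤ hX.1.eigenvalues i) ∧
    (∀ i, (1 - γ) * μ / ω ≤ hS.1.eigenvalues i) := by
  set R := hX.posSemidef.sqrt with hR
  set M := R * S * R with hM
  have hRh : R.IsHermitian := hX.posSemidef.posSemidef_sqrt.1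
  have hμ0 : 0 ≤ μ := by
    have h0 : (0:ℝ) ≤ γ * μ := le_trans (Real.sqrt_nonneg _) hN
    nlinarith
  -- lower bound on quadratic form of M
  have hlow : ∀ v : Fin n → ℝ, (1 - γ) * μ * (v ⬝ᵥ v) ≤ v ⬝ᵥ M *ᵥ v := by
    intro v
    have hvv : 0 ≤ v ⬝ᵥ v := Finset.sum_nonneg fun i _ => mul_self_nonneg _
    have h1 := (abs_le.mp (abs_quad_le (M - μ • 1) v)).1
    have h2 : v ⬝ᵥ (M - μ • (1 : Matrix (Fin n) (Fin n) ℝ)) *ᵥ v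
        = v ⬝ᵥ M *ᵥ v - μ * (v ⬝ᵥ v) := by
      rw [sub_mulVec, dotProduct_sub, smul_mulVec, one_mulVec, dotProduct_smul,
        smul_eq_mul]
    rw [h2] at h1
    nlinarith [mul_le_mul_of_nonneg_right hN hvv]
  have hunit : ∀ (A : Matrix (Fin n) (Fin n) ℝ) (hA : A.IsHermitian) (i : Fin n),
      ⇑(hA.eigenvectorBasis i) ⬝ᵥ ⇑(hA.eigenvectorBasis i) = 1 := by
    intro A hA i
    have h := hA.eigenvectorBasis.orthonormal.1 i
    have h2 : (⇑(hA.eigenvectorBasis i) ⬝ᵥ ⇑(hA.eigenvectorBasis i))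
        = (inner ℝ (hA.eigenvectorBasis i) (hA.eigenvectorBasis i) : ℝ) := by
      rw [EuclideanSpace.inner_eq_star_dotProduct]
      rfl
    rw [h2, real_inner_self_eq_norm_sq, h, one_pow]
  constructor
  · intro i
    set v := ⇑(hX.1.eigenvectorBasis i) with hv
    set lam := hX.1.eigenvalues i with hlam
    have hlam0 : 0 ≤ lam := hX.posSemidef.eigenvalues_nonneg i
    have hsq : R *ᵥ v = Real.sqrt lam • v := sqrt_mulVec_eigenvectorBasis hX.posSemidef i
    have hvv1 : v ⬝ᵥ v = 1 := hunit X hX.1 i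
    have hMv : v ⬝ᵥ M *ᵥ v = lam * (v ⬝ᵥ S *ᵥ v) := by
      rw [hM, ← mulVec_mulVec, ← mulVec_mulVec, hsq, mulVec_smul, mulVec_smul,
        dotProduct_smul, smul_eq_mul, symm_dot hRh, hsq, smul_dotProduct, smul_eq_mul,
        ← mul_assoc, Real.mul_self_sqrt hlam0]
    have hS1 : v ⬝ᵥ S *ᵥ v ≤ ω * (v ⬝ᵥ v) := quad_le_of_eig_le hS.1 hSmax v
    have h3 := hlow v
    rw [hMv, hvv1] at h3
    rw [hvv1] at hS1
    rw [div_le_iff₀ hω]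
    nlinarith
  · intro i
    set u := ⇑(hS.1.eigenvectorBasis i) with hu
    set sig := hS.1.eigenvalues i with hsig
    have huu1 : u ⬝ᵥ u = 1 := hunit S hS.1 i
    have hdet : IsUnit R.det := by
      have h1 : R.det * R.det = X.det := by
        rw [← Matrix.det_mul, hX.posSemidef.sqrt_mul_self]
      have h2 : X.det ≠ 0 := ne_of_gt hX.det_pos
      have : R.det ≠ 0 := fun h => h2 (by rw [← h1, h, mul_zero])
      exact this.isUnit
    set w := R⁻¹ *ᵥ u with hw
    have hRw : R *ᵥ w = u := by
      rw [hw, mulVec_mulVec, Matrix.mul_nonsing_inv _ hdet, one_mulVec]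
    have hww : 0 ≤ w ⬝ᵥ w := Finset.sum_nonneg fun j _ => mul_self_nonneg _
    have hSu : S *ᵥ u = sig • u := hS.1.mulVec_eigenvectorBasis i
    have hMw : w ⬝ᵥ M *ᵥ w = sig := by
      rw [hM, ← mulVec_mulVec, ← mulVec_mulVec, hRw, symm_dot hRh, hRw, hSu,
        dotProduct_smul, smul_eq_mul, huu1, mul_one]
    have hXw : w ⬝ᵥ X *ᵥ w ≤ ω * (w ⬝ᵥ w) := quad_le_of_eig_le hX.1 hXmax w
    have huw : u ⬝ᵥ u = w ⬝ᵥ X *ᵥ w := by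
      rw [← hRw, symm_dot hRh, mulVec_mulVec, hX.posSemidef.sqrt_mul_self]
      exact (symm_dot hX.1 w w).symm
    have h3 := hlow w
    rw [hMw] at h3
    rw [huu1] at huw
    rw [div_le_iff₀ hω]
    have hc : (0:ℝ) ≤ (1 - γ) * μ := mul_nonneg (by linarith) hμ0
    have h4 : 1 ≤ ω * (w ⬝ᵥ w) := by linarith
    nlinarith [mul_le_mul_of_nonneg_right h3 hω.le, mul_le_mul_of_nonneg_left h4 hc]
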